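/- Let K be a field, E a finite type, and W ⊆ K^E a K-linear subspace. For each e ∈ E let η_e : W → K be the restriction to W of the e-th coordinate functional. Then the number of distinct hyperplanes |{ker η_e : e ∈ E, η_e ≠ 0}| equals dim_K W if and only if W admits a K-basis w₁,…,w_d whose supports {e : wᵢ(e) ≠ 0} are pairwise disjoint. -/

import Mathlib

/-- The restriction to a subspace `W ⊆ K^E` of the `e`-th coordinate functional. -/
noncomputable def coordRestrict {K E : Type*} [Field K] (W : Submodule K (E → K)) (e : E) :
    W →ₗ[K] K := (LinearMap.proj e).comp W.subtype

/-- Two functionals with the same kernel are proportional. -/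
lemma exists_smul_of_ker_eq_ker' {K W : Type*} [Field K] [AddCommGroup W] [Module K W]
    (f g : W →ₗ[K] K) (hf : f ≠ 0)
    (h : LinearMap.ker f = LinearMap.ker g) : ∃ c : K, g = c • f := by
  obtain ⟨x, hx⟩ : ∃ x, f x ≠ 0 := by
    by_contra hc; push_neg at hc; exact hf (LinearMap.ext hc)
  refine ⟨g x / f x, ?_⟩
  ext y
  have hker : y - (f y / f x) • x ∈ LinearMap.ker f := by
    simp [LinearMap.mem_ker, div_mul_cancel₀, hx]
  rw [h, LinearMap.mem_ker, map_sub, map_smul, sub_eq_zero] at hker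
  simp only [LinearMap.smul_apply, smul_eq_mul, hker]
  field_simp

/-- For a subspace `W ⊆ K^E` (`E` finite), the number of distinct hyperplanes
`{ker η_e : η_e ≠ 0}` cut out on `W` by the coordinate functionals equals `dim_K W`
if and only if `W` admits a basis whose members have pairwise disjoint supports. -/
theorem coord_arrangement_boolean_iff_separated_basis
    {K : Type*} [Field K] {E : Type*} [Fintype E]
    (W : Submodule K (E → K))
    (η : E → (W →ₗ[K] K)) (hη : ∀ e, η e = coordRestrict W e) :
    {X : Submodule K W | ∃ e, η e ≠ 0 ∧ X = LinearMap.ker (η e)}.ncard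
        = Module.finrank K W ↔
      ∃ (d : ℕ) (w : Module.Basis (Fin d) K W),
        ∀ i j, i ≠ j → ∀ e : E, (w i : E → K) e = 0 ∨ (w j : E → K) e = 0 := by
  classical
  have hFD : FiniteDimensional K W := by infer_instance
  have hηapp : ∀ e (x : W), η e x = (x : E → K) e := by
    intro e x; rw [hη e]; rfl
  set 𝒮 := {X : Submodule K W | ∃ e, η e ≠ 0 ∧ X = LinearMap.ker (η e)} with h𝒮
  constructor
  · -- forward direction
    intro hcard
    set d := Module.finrank K W with hd
    have hfin : 𝒮.Finite := by
      apply (Set.finite_range (fun e => LinearMap.ker (η e))).subset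
      rintro X ⟨e, -, rfl⟩; exact ⟨e, rfl⟩
    -- the coordinate functionals span the dual
    have htop : Submodule.span K (Set.range η) = ⊤ := by
      apply Submodule.span_eq_top_of_ne_zero
      intro z hz
      have hz' : (z : E → K) ≠ 0 := fun h => hz (Subtype.ext h)
      obtain ⟨e, he⟩ := Function.ne_iff.mp hz'
      exact ⟨η e, ⟨e, rfl⟩, by rwa [hηapp]⟩
    -- choose one coordinate functional per hyperplane
    have hchoice : ∀ X : 𝒮, ∃ e, η e ≠ 0 ∧ (X : Submodule K W) = LinearMap.ker (η e) := by
      rintro ⟨X, hX⟩; exact hX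
    choose ε hε0 hεker using hchoice
    have hcard' : hfin.toFinset.card = d := by
      rw [← Set.ncard_eq_toFinset_card 𝒮 hfin]; exact hcard
    let q : Fin d ≃ {X // X ∈ hfin.toFinset} :=
      (hfin.toFinset.equivFin.trans (finCongr hcard')).symm
    let v' : {X // X ∈ hfin.toFinset} → Module.Dual K W :=
      fun X => η (ε ⟨X.1, hfin.mem_toFinset.mp X.2⟩)
    let v : Fin d → Module.Dual K W := fun i => v' (q i)
    have hvmem : ∀ X : 𝒮, v' ⟨X.1, hfin.mem_toFinset.mpr X.2⟩ ∈ Set.range v := by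
      intro X
      exact ⟨q.symm ⟨X.1, hfin.mem_toFinset.mpr X.2⟩, by simp [v]⟩
    -- range v spans the dual
    have hspan : ⊤ ≤ Submodule.span K (Set.range v) := by
      rw [← htop, Submodule.span_le]
      rintro _ ⟨e, rfl⟩
      by_cases hne : η e = 0
      · rw [hne]; exact Submodule.zero_mem _
      · have hX : LinearMap.ker (η e) ∈ 𝒮 := ⟨e, hne, rfl⟩
        set X : 𝒮 := ⟨LinearMap.ker (η e), hX⟩ with hXdef
        have hker : LinearMap.ker (η (ε X)) = LinearMap.ker (η e) := (hεker X).symm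
        obtain ⟨c, hc⟩ := exists_smul_of_ker_eq_ker' (η (ε X)) (η e) (hε0 X) hker
        rw [hc]
        exact Submodule.smul_mem _ _ (Submodule.subset_span (hvmem X))
    have hcardv : Fintype.card (Fin d) = Module.finrank K (Module.Dual K W) := by
      rw [Fintype.card_fin, Subspace.dual_finrank_eq]
    let b : Module.Basis (Fin d) K (Module.Dual K W) :=
      basisOfTopLeSpanOfCardEqFinrank v hspan hcardv
    have hb : ⇑b = v := coe_basisOfTopLeSpanOfCardEqFinrank v hspan hcardv
    let w : Module.Basis (Fin d) K W := b.dualBasis.map (Module.evalEquiv K W).symm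
    have hkey : ∀ i j, b i (w j) = if i = j then 1 else 0 := by
      intro i j
      have : w j = (Module.evalEquiv K W).symm (b.dualBasis j) := by
        simp [w, Module.Basis.map_apply]
      rw [this, Module.apply_evalEquiv_symm_apply, Module.Basis.dualBasis_apply_self]
    refine ⟨d, w, ?_⟩
    intro i j hij e
    by_cases hne : η e = 0
    · left; rw [← hηapp, hne]; rfl
    · have hX : LinearMap.ker (η e) ∈ 𝒮 := ⟨e, hne, rfl⟩
      set X : 𝒮 := ⟨LinearMap.ker (η e), hX⟩ with hXdef
      set k : Fin d := q.symm ⟨X.1, hfin.mem_toFinset.mpr X.2⟩ with hk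
      have hvk : v k = η (ε X) := by simp [v, hk, v']
      have hkerk : LinearMap.ker (v k) = LinearMap.ker (η e) := by
        rw [hvk, ← hεker X]
      have aux : ∀ l, l ≠ k → (w l : E → K) e = 0 := by
        intro l hl
        have h1 : b k (w l) = 0 := by rw [hkey k l, if_neg (fun h => hl h.symm)]
        have h2 : w l ∈ LinearMap.ker (η e) := by
          rw [← hkerk, LinearMap.mem_ker, ← hb]; exact h1
        rw [← hηapp]; exact h2
      rcases eq_or_ne i k with rfl | h
      · right; exact aux j (fun h => hij h.symm)
      · left; exact aux i h
  · -- backward direction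
    rintro ⟨d, w, hdisj⟩
    have hd : Module.finrank K W = d := by
      rw [Module.finrank_eq_card_basis w, Fintype.card_fin]
    set H : Fin d → Submodule K W := fun i => Submodule.span K (⇑w '' {i}ᶜ) with hH
    have key : ∀ e i, (w i : E → K) e ≠ 0 → LinearMap.ker (η e) = H i := by
      intro e i hwi
      apply le_antisymm
      · intro x hx
        rw [LinearMap.mem_ker] at hx
        have hsum : η e (∑ j, w.repr x j • w j) = 0 := by
          rw [w.sum_repr x]; exact hx
        rw [map_sum] at hsum
        simp only [map_smul, smul_eq_mul] at hsum
        have hterm : ∀ j ∈ Finset.univ, j ≠ i → w.repr x j * η e (w j) = 0 := by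
          intro j _ hj
          rcases hdisj j i hj e with h | h
          · rw [hηapp, h, mul_zero]
          · exact absurd h hwi
        rw [Finset.sum_eq_single i hterm (by simp)] at hsum
        rw [hηapp] at hsum
        have hrepr : w.repr x i = 0 := by
          rcases mul_eq_zero.mp hsum with h | h
          · exact h
          · exact absurd h hwi
        rw [hH]
        apply w.mem_span_image.mpr
        intro j hj
        simp only [Finset.mem_coe, Finsupp.mem_support_iff] at hj
        simp only [Set.mem_compl_iff, Set.mem_singleton_iff]
        intro hji
        exact hj (hji ▸ hrepr)
      · rw [hH, Submodule.span_le]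
        rintro _ ⟨j, hj, rfl⟩
        simp only [Set.mem_compl_iff, Set.mem_singleton_iff] at hj
        rw [SetLike.mem_coe, LinearMap.mem_ker, hηapp]
        rcases hdisj j i hj e with h | h
        · exact h
        · exact absurd h hwi
    have hexist : ∀ i, ∃ e, (w i : E → K) e ≠ 0 := by
      intro i
      have : (w i : E → K) ≠ 0 := fun h => w.ne_zero i (Subtype.ext h)
      exact Function.ne_iff.mp this
    have hinj : Function.Injective H := by
      intro i j hEq
      by_contra hij
      have h1 : w i ∈ H j := by
        rw [hH]; exact w.self_mem_span_image.mpr (by simp [hij])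
      have h2 : w i ∉ H i := by
        rw [hH]
        intro hmem
        exact (by simp : i ∉ ({i}ᶜ : Set (Fin d))) (w.self_mem_span_image.mp hmem)
      rw [← hEq] at h1
      exact h2 h1
    have hset : 𝒮 = Set.range H := by
      apply Set.eq_of_subset_of_subset
      · rintro X ⟨e, hne, rfl⟩
        have : ∃ i, (w i : E → K) e ≠ 0 := by
          by_contra hc
          push_neg at hc
          exact hne (w.ext fun i => by rw [hηapp]; simp [hc i])
        obtain ⟨i, hi⟩ := this
        exact ⟨i, (key e i hi).symm⟩
      · rintro _ ⟨i, rfl⟩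
        obtain ⟨e, he⟩ := hexist i
        have hne : η e ≠ 0 := by
          intro h0
          apply he
          rw [← hηapp, h0]; rfl
        exact ⟨e, hne, (key e i he).symm⟩
    rw [h𝒮] at hset ⊢
    rw [hset, hd, ← Set.image_univ, Set.ncard_image_of_injective _ hinj, Set.ncard_univ,
      Nat.card_eq_fintype_card, Fintype.card_fin]
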